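/- Single-source domain adaptation bound: for any hypothesis h ∈ H and any source distribution D' and target distribution D over X × Y with 0-1 loss, L_D(h) ≤ L_{D'}(h) + (1/2)·d_{H∆H}(D', D) + λ, where λ = inf_{h'∈H} (L_{D'}(h') + L_D(h')) and d_{H∆H} is the H∆H-divergence between the marginals of D' and D on X. -/

import Mathlib

open MeasureTheory

noncomputable def disag {X Y : Type*} [MeasurableSpace X] (D : Measure X) (h h' : X → Y) : ℝ :=
  (D {x | h x ≠ h' x}).toReal

noncomputable def HdH {X Y : Type*} [MeasurableSpace X] (H : Set (X → Y)) (D' D : Measure X) : ℝ :=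
  2 * sSup {r : ℝ | ∃ h ∈ H, ∃ h' ∈ H, r = |disag D' h h' - disag D h h'|}

/-- 0-1 risk of a binary classifier `h` under a distribution on `X × Bool`. -/
noncomputable def risk01 {X : Type*} [MeasurableSpace X]
    (D : Measure (X × Bool)) (h : X → Bool) : ℝ :=
  (D {p | h p.1 ≠ p.2}).toReal

lemma disag_map_eq {X : Type*} [MeasurableSpace X] (D : Measure (X × Bool))
    (h h' : X → Bool) (hm : Measurable h) (hm' : Measurable h') :
    disag (D.map Prod.fst) h h' = (D {p : X × Bool | h p.1 ≠ h' p.1}).toReal := by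
  unfold disag
  have hms : MeasurableSet {x : X | h x ≠ h' x} :=
    (measurableSet_eq_fun hm hm').compl
  rw [Measure.map_apply measurable_fst hms]
  rfl

lemma toReal_tri {X : Type*} [MeasurableSpace X] (D : Measure (X × Bool))
    [IsProbabilityMeasure D] (S T U : Set (X × Bool)) (hsub : S ⊆ T ∪ U) :
    (D S).toReal ≤ (D T).toReal + (D U).toReal := by
  rw [← ENNReal.toReal_add (measure_ne_top D T) (measure_ne_top D U)]
  apply ENNReal.toReal_mono
  · exact ENNReal.add_ne_top.2 ⟨measure_ne_top D T, measure_ne_top D U⟩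
  · exact (measure_mono hsub).trans (measure_union_le T U)

/-- Single-source domain adaptation bound (Ben-David et al.; Lemma 1 of the paper):
`L_D(h) ≤ L_{D'}(h) + (1/2)·d_{H∆H}(D', D) + λ`. -/
theorem single_source_domain_adaptation
    {X : Type*} [MeasurableSpace X]
    (H : Set (X → Bool)) (hne : H.Nonempty) (hmeas : ∀ h ∈ H, Measurable h)
    (D' D : Measure (X × Bool)) [IsProbabilityMeasure D'] [IsProbabilityMeasure D]
    (hbdd : BddAbove {r : ℝ | ∃ h ∈ H, ∃ h' ∈ H,
      r = |disag (D'.map Prod.fst) h h' - disag (D.map Prod.fst) h h'|})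
    (h : X → Bool) (hh : h ∈ H) :
    risk01 D h ≤ risk01 D' h + (1 / 2 : ℝ) * HdH H (D'.map Prod.fst) (D.map Prod.fst)
      + sInf {r : ℝ | ∃ h' ∈ H, r = risk01 D' h' + risk01 D h'} := by
  set S := {r : ℝ | ∃ h ∈ H, ∃ h' ∈ H,
      r = |disag (D'.map Prod.fst) h h' - disag (D.map Prod.fst) h h'|}
  have hHdH : (1 / 2 : ℝ) * HdH H (D'.map Prod.fst) (D.map Prod.fst) = sSup S := by
    unfold HdH; ring
  rw [hHdH]
  have hsetne : {r : ℝ | ∃ h' ∈ H, r = risk01 D' h' + risk01 D h'}.Nonempty := by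
    obtain ⟨h0, hh0⟩ := hne
    exact ⟨risk01 D' h0 + risk01 D h0, h0, hh0, rfl⟩
  rw [← sub_le_iff_le_add']
  apply le_csInf hsetne
  rintro r ⟨h', hh', rfl⟩
  rw [sub_le_iff_le_add]
  have hm := hmeas h hh
  have hm' := hmeas h' hh'
  -- step 1: risk01 D h ≤ risk01 D h' + disag (D.map fst) h h'
  have step1 : risk01 D h ≤ risk01 D h' + disag (D.map Prod.fst) h h' := by
    rw [disag_map_eq D h h' hm hm']
    apply toReal_tri
    rintro ⟨x, b⟩ hx
    by_cases hb : h' x = b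
    · exact Or.inr (fun he => hx (he.trans hb))
    · exact Or.inl hb
  -- step 2: disag (D.map fst) h h' ≤ disag (D'.map fst) h h' + sSup S
  have step2 : disag (D.map Prod.fst) h h' ≤ disag (D'.map Prod.fst) h h' + sSup S := by
    have hmem : |disag (D'.map Prod.fst) h h' - disag (D.map Prod.fst) h h'| ∈ S :=
      ⟨h, hh, h', hh', rfl⟩
    have := le_csSup hbdd hmem
    have habs : disag (D.map Prod.fst) h h' - disag (D'.map Prod.fst) h h'
        ≤ |disag (D'.map Prod.fst) h h' - disag (D.map Prod.fst) h h'| := by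
      rw [abs_sub_comm]; exact le_abs_self _
    linarith
  -- step 3: disag (D'.map fst) h h' ≤ risk01 D' h + risk01 D' h'
  have step3 : disag (D'.map Prod.fst) h h' ≤ risk01 D' h + risk01 D' h' := by
    rw [disag_map_eq D' h h' hm hm']
    apply toReal_tri
    rintro ⟨x, b⟩ hx
    by_cases hb : h x = b
    · exact Or.inr (fun he => hx (hb.trans he.symm))
    · exact Or.inl hb
  linarith
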